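/- arXiv:1803.08524 — 4 statements merged into one kernel-verified Lean document; each statement's English description precedes it below -/
import Mathlib

section
/- Let X be a type and let Div X := (X →₀ ℤ) be the free abelian group on X. Let D_1, …, D_n ∈ Div X be nonzero elements each of whose coefficients lies in {0, 1} (i.e., each D_i is a reduced divisor), and suppose the supports of the D_i are pairwise disjoint. Then the subgroup W generated by D_1, …, D_n is a direct summand of Div X: there exists a subgroup W' of Div X with Div X = W ⊕ W' (internal direct sum). -/
/-- Lemma 3.1(a): if `D_1, …, D_n` are reduced divisors (nonzero, all coefficients `0`
or `1`) on `X` with pairwise disjoint supports, then the subgroup they generate is a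
direct summand of the divisor group `Div X = X →₀ ℤ`. -/
theorem reduced_divisors_generate_direct_summand
    {X : Type*} (n : ℕ) (D : Fin n → (X →₀ ℤ))
    (hne : ∀ i, D i ≠ 0)
    (hred : ∀ i, ∀ x : X, D i x = 0 ∨ D i x = 1)
    (hdisj : ∀ i j, i ≠ j → Disjoint (D i).support (D j).support) :
    ∃ W' : AddSubgroup (X →₀ ℤ),
      IsCompl (AddSubgroup.closure (Set.range D)) W' := by
  classical
  set p : Submodule ℤ (X →₀ ℤ) := Submodule.span ℤ (Set.range D) with hp
  have hmem : ∀ i, D i ∈ p := fun i => Submodule.subset_span ⟨i, rfl⟩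
  -- choose a point in each support
  have hsup : ∀ i, ((D i).support).Nonempty := fun i =>
    Finsupp.support_nonempty_iff.mpr (hne i)
  set x : Fin n → X := fun i => (hsup i).choose with hx
  have hxmem : ∀ i, x i ∈ (D i).support := fun i => (hsup i).choose_spec
  have hone : ∀ i, D i (x i) = 1 := by
    intro i
    rcases hred i (x i) with h | h
    · exact absurd h (Finsupp.mem_support_iff.mp (hxmem i))
    · exact h
  have hzero : ∀ i j, i ≠ j → D j (x i) = 0 := by
    intro i j hij
    by_contra h
    exact (Finset.disjoint_left.mp (hdisj j i (Ne.symm hij))) (Finsupp.mem_support_iff.mpr h)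
      (hxmem i)
  -- the projection
  set f : (X →₀ ℤ) →ₗ[ℤ] p :=
    ∑ i : Fin n, (Finsupp.lapply (x i)).smulRight (⟨D i, hmem i⟩ : p) with hf
  have hfD : ∀ j, f (D j) = ⟨D j, hmem j⟩ := by
    intro j
    rw [hf]
    simp only [LinearMap.sum_apply, LinearMap.smulRight_apply, Finsupp.lapply_apply]
    rw [Finset.sum_eq_single j]
    · rw [hone j, one_smul]
    · intro i _ hij
      rw [hzero i j hij, zero_smul]
    · intro h; exact absurd (Finset.mem_univ j) h
  have hproj : ∀ w : p, f (w : X →₀ ℤ) = w := by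
    rintro ⟨w, hw⟩
    refine Subtype.ext ?_
    induction hw using Submodule.span_induction with
    | mem v hv =>
      rcases hv with ⟨j, rfl⟩
      rw [hfD j]
    | zero => simp
    | add a b ha hb iha ihb => simp [iha, ihb]
    | smul c a ha iha => simp [iha]
  have hcompl : IsCompl p (LinearMap.ker f) := LinearMap.isCompl_of_proj hproj
  refine ⟨(LinearMap.ker f).toAddSubgroup, ?_⟩
  have hclos : AddSubgroup.closure (Set.range D) = p.toAddSubgroup := by
    rw [hp, Submodule.span_int_eq_addSubgroupClosure]
  rw [hclos]
  have := (AddSubgroup.toIntSubmodule (M := X →₀ ℤ)).symm.isCompl hcompl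
  exact this
end

section
/- Let X be a type and let Div X := (X →₀ ℤ) be the free abelian group on X. Define the degree map deg : Div X → ℤ by deg(D) = sum of the coefficients of D, and set Div⁰ X := ker(deg). Let D_1, …, D_n ∈ Div X be nonzero elements each of whose coefficients lies in {0, 1}, with pairwise disjoint supports; let W be the subgroup they generate and W⁰ := W ∩ Div⁰ X. Then the quotient groups (Div X)/W, (Div X)/W⁰, and (Div⁰ X)/W⁰ are all torsion-free. -/
/-- The degree of a divisor in `Div X = X →₀ ℤ`: the sum of its coefficients. -/
noncomputable def divDeg {X : Type*} : (X →₀ ℤ) →+ ℤ :=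
  (Finsupp.linearCombination ℤ (fun _ : X => (1 : ℤ))).toAddMonoidHom

/-- A predicate on an additive monoid saying that only 0 is of finite order
(the Mathlib definition of December 2024, since removed). -/
def AddMonoid.IsTorsionFree (G : Type*) [AddMonoid G] : Prop :=
  ∀ g : G, g ≠ 0 → ¬IsOfFinAddOrder g

/-- A quotient by a "divisible-closed" subgroup is torsion-free. -/
lemma torsionFree_quotient_of_div {G : Type*} [AddCommGroup G] (H : AddSubgroup G)
    (h : ∀ (m : ℕ) (f : G), m ≠ 0 → m • f ∈ H → f ∈ H) :
    AddMonoid.IsTorsionFree (G ⧸ H) := by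
  intro g hg hfin
  obtain ⟨f, rfl⟩ := QuotientAddGroup.mk_surjective g
  obtain ⟨m, hm, hmg⟩ := isOfFinAddOrder_iff_nsmul_eq_zero.mp hfin
  apply hg
  rw [QuotientAddGroup.eq_zero_iff]
  refine h m f hm.ne' ((QuotientAddGroup.eq_zero_iff _).mp ?_)
  simpa using hmg

/-- Lemma 3.1(b): if `D_1, …, D_n` are reduced divisors on `X` with pairwise disjoint
supports, `W` the subgroup they generate, `Div⁰ X` the kernel of the degree map and
`W⁰ = W ∩ Div⁰ X`, then `(Div X)/W`, `(Div X)/W⁰` and `(Div⁰ X)/W⁰` are torsion-free. -/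
theorem reduced_divisors_quotients_torsion_free
    {X : Type*} (n : ℕ) (D : Fin n → (X →₀ ℤ))
    (hne : ∀ i, D i ≠ 0)
    (hred : ∀ i, ∀ x : X, D i x = 0 ∨ D i x = 1)
    (hdisj : ∀ i j, i ≠ j → Disjoint (D i).support (D j).support)
    (W : AddSubgroup (X →₀ ℤ)) (hW : W = AddSubgroup.closure (Set.range D)) :
    AddMonoid.IsTorsionFree ((X →₀ ℤ) ⧸ W) ∧
    AddMonoid.IsTorsionFree ((X →₀ ℤ) ⧸ (W ⊓ (divDeg (X := X)).ker)) ∧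
    AddMonoid.IsTorsionFree
      (↥(divDeg (X := X)).ker ⧸ (W.comap (divDeg (X := X)).ker.subtype)) := by
  -- membership in W is given by integer combinations
  have hWmem : ∀ g : X →₀ ℤ, g ∈ W ↔ ∃ c : Fin n → ℤ, ∑ i, c i • D i = g := by
    intro g
    rw [hW, ← Submodule.span_int_eq_addSubgroupClosure, Submodule.mem_toAddSubgroup,
      Submodule.mem_span_range_iff_exists_fun]
  -- choose a point in the support of each D i
  have hsupp : ∀ i, ∃ x, x ∈ (D i).support := fun i =>
    (Finsupp.support_nonempty_iff.mpr (hne i))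
  choose x hx using hsupp
  have hDx : ∀ i, D i (x i) = 1 := fun i =>
    (hred i (x i)).resolve_left (Finsupp.mem_support_iff.mp (hx i))
  have hDj : ∀ i j, j ≠ i → D j (x i) = 0 := by
    intro i j hj
    by_contra hne'
    exact Finset.disjoint_left.mp (hdisj j i hj) (Finsupp.mem_support_iff.mpr hne') (hx i)
  -- key divisibility property of W
  have key : ∀ (m : ℕ) (f : X →₀ ℤ), m ≠ 0 → m • f ∈ W → f ∈ W := by
    intro m f hm hmf
    obtain ⟨c, hc⟩ := (hWmem _).mp hmf
    have hcval : ∀ i, c i = (m : ℤ) * f (x i) := by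
      intro i
      have := congrArg (fun g : X →₀ ℤ => g (x i)) hc
      simp only [Finsupp.finset_sum_apply, Finsupp.smul_apply, smul_eq_mul,
        Finsupp.coe_smul, Pi.smul_apply] at this
      rw [Finset.sum_eq_single i (fun j _ hj => by rw [hDj i j hj, mul_zero])
        (fun h => (h (Finset.mem_univ i)).elim), hDx i, mul_one] at this
      simpa using this
    refine (hWmem f).mpr ⟨fun i => f (x i), ?_⟩
    have hmne : (m : ℤ) ≠ 0 := Int.natCast_ne_zero.mpr hm
    apply smul_right_injective (X →₀ ℤ) hmne
    show (m : ℤ) • ∑ i, f (x i) • D i = (m : ℤ) • f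
    rw [Finset.smul_sum]
    calc ∑ i, (m : ℤ) • f (x i) • D i = ∑ i, c i • D i := by
          refine Finset.sum_congr rfl fun i _ => ?_
          rw [smul_smul, ← hcval i]
        _ = (m : ℤ) • f := by rw [hc, natCast_zsmul]
  have keydeg : ∀ (m : ℕ) (f : X →₀ ℤ), m ≠ 0 →
      m • f ∈ (divDeg (X := X)).ker → f ∈ (divDeg (X := X)).ker := by
    intro m f hm hmf
    rw [AddMonoidHom.mem_ker] at hmf ⊢
    rw [map_nsmul, nsmul_eq_mul] at hmf
    exact (mul_eq_zero.mp hmf).resolve_left (by exact_mod_cast hm)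
  refine ⟨torsionFree_quotient_of_div _ key, torsionFree_quotient_of_div _ ?_,
    torsionFree_quotient_of_div _ ?_⟩
  · intro m f hm hmf
    exact ⟨key m f hm hmf.1, keydeg m f hm hmf.2⟩
  · intro m f hm hmf
    rw [AddSubgroup.mem_comap] at hmf ⊢
    exact key m f.1 hm (by simpa using hmf)
end

section
/- Let X be a type and let Div X := (X →₀ ℤ) be the free abelian group on X, with degree map deg : Div X → ℤ given by the sum of coefficients and Div⁰ X := ker(deg). Let I be a finite index set, let E : I → Div X be a family of nonzero elements each of whose coefficients lies in {0,1}, with pairwise disjoint supports, and let i₀ ∈ I be an index with deg(E_{i₀}) = 1. For i ∈ I set d_i := deg(E_i) and D_i := E_i − d_i · E_{i₀}. Then the family {D_i : i ∈ I, i ≠ i₀} is ℤ-linearly independent and generates the subgroup V⁰ := V ∩ Div⁰ X, where V is the subgroup generated by {E_i : i ∈ I}; moreover (Div⁰ X)/V⁰ is torsion-free. -/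
section Aux

variable {X : Type*} {I : Type*} [Fintype I] (E : I → (X →₀ ℤ))

/-- Evaluation of a combination of the `E i` at a point of the support of `E i`. -/
lemma aux_eval_sum
    (hred : ∀ i, ∀ x : X, E i x = 0 ∨ E i x = 1)
    (hdisj : ∀ i j, i ≠ j → Disjoint (E i).support (E j).support)
    (n : I → ℤ) (i : I) (x : X) (hx : x ∈ (E i).support) :
    (∑ j, n j • E j) x = n i := by
  classical
  rw [Finsupp.finset_sum_apply]
  rw [Finset.sum_eq_single i]
  · have h1 : E i x = 1 := (hred i x).resolve_left (Finsupp.mem_support_iff.mp hx)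
    simp [h1]
  · intro j _ hj
    have hxj : x ∉ (E j).support := Finset.disjoint_left.mp (hdisj i j (fun h => hj h.symm)) hx
    simp [Finsupp.notMem_support_iff.mp hxj]
  · simp

lemma aux_memV_iff (v : X →₀ ℤ) :
    v ∈ AddSubgroup.closure (Set.range E) ↔ ∃ n : I → ℤ, ∑ i, n i • E i = v := by
  rw [← Submodule.span_int_eq_addSubgroupClosure, Submodule.mem_toAddSubgroup,
    Submodule.mem_span_range_iff_exists_fun]

/-- If `n • x` is a combination of the `E i` with `n ≠ 0`, then so is `x`. -/
lemma aux_divide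
    (hne : ∀ i, E i ≠ 0)
    (hred : ∀ i, ∀ x : X, E i x = 0 ∨ E i x = 1)
    (hdisj : ∀ i j, i ≠ j → Disjoint (E i).support (E j).support)
    (n : ℤ) (hn : n ≠ 0) (x : X →₀ ℤ) (m : I → ℤ)
    (h : ∑ i, m i • E i = n • x) : ∃ k : I → ℤ, ∑ i, k i • E i = x := by
  classical
  choose pt hpt using fun i => Finsupp.support_nonempty_iff.mpr (hne i)
  refine ⟨fun i => x (pt i), ?_⟩
  have hm : ∀ i, m i = n * x (pt i) := by
    intro i
    have h1 := aux_eval_sum E hred hdisj m i (pt i) (hpt i)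
    rw [h] at h1
    simpa using h1.symm
  have hz : n • (∑ i, (fun i => x (pt i)) i • E i - x) = 0 := by
    rw [smul_sub, Finset.smul_sum, ← h]
    have : ∀ i ∈ Finset.univ, n • ((fun i => x (pt i)) i • E i) = m i • E i := by
      intro i _
      rw [smul_smul, ← hm i]
    rw [Finset.sum_congr rfl this, sub_self]
  rcases smul_eq_zero.mp hz with h' | h'
  · exact absurd h' hn
  · exact sub_eq_zero.mp h'

end Aux

/-- Lemmas 3.4/3.5: let `E i` (for `i` in a finite index set) be reduced divisors with
pairwise disjoint supports and let `i₀` be an index with `deg (E i₀) = 1`. Setting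
`D i = E i − deg (E i) • E i₀`, the family `{D i : i ≠ i₀}` is `ℤ`-linearly independent
and generates `V⁰ = V ∩ Div⁰ X`, where `V` is the subgroup generated by the `E i`;
moreover `(Div⁰ X)/V⁰` is torsion-free. -/
theorem fiber_divisors_basis_of_degree_zero_part
    {X : Type*} {I : Type*} [Fintype I] (E : I → (X →₀ ℤ))
    (hne : ∀ i, E i ≠ 0)
    (hred : ∀ i, ∀ x : X, E i x = 0 ∨ E i x = 1)
    (hdisj : ∀ i j, i ≠ j → Disjoint (E i).support (E j).support)
    (i₀ : I) (hi₀ : divDeg (E i₀) = 1)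
    (D : I → (X →₀ ℤ)) (hD : ∀ i, D i = E i - divDeg (E i) • E i₀)
    (V : AddSubgroup (X →₀ ℤ)) (hV : V = AddSubgroup.closure (Set.range E)) :
    LinearIndependent ℤ (fun i : {i : I // i ≠ i₀} => D i.1) ∧
    AddSubgroup.closure (Set.range (fun i : {i : I // i ≠ i₀} => D i.1)) =
      V ⊓ (divDeg (X := X)).ker ∧
    ∀ g : (↥(divDeg (X := X)).ker ⧸ (V.comap (divDeg (X := X)).ker.subtype)),
      g ≠ 0 → ¬IsOfFinAddOrder g := by
  classical
  subst hV
  choose pt hpt using fun i => Finsupp.support_nonempty_iff.mpr (hne i)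
  -- pointwise values
  have hE1 : ∀ i, ∀ x ∈ (E i).support, E i x = 1 := fun i x hx =>
    (hred i x).resolve_left (Finsupp.mem_support_iff.mp hx)
  have hE0 : ∀ i j, i ≠ j → ∀ x ∈ (E i).support, E j x = 0 := fun i j hij x hx =>
    Finsupp.notMem_support_iff.mp (Finset.disjoint_left.mp (hdisj i j hij) hx)
  -- evaluation of sums of D's
  have evalD : ∀ (g : {i : I // i ≠ i₀} → ℤ) (i : I) (hi : i ≠ i₀) (x : X),
      x ∈ (E i).support →
      (∑ j : {i : I // i ≠ i₀}, g j • D j.1) x = g ⟨i, hi⟩ := by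
    intro g i hi x hx
    rw [Finsupp.finset_sum_apply]
    rw [Finset.sum_eq_single (⟨i, hi⟩ : {i : I // i ≠ i₀})]
    · simp [hD, hE1 i x hx, hE0 i i₀ hi x hx]
    · intro j _ hj
      have hji : (j : I) ≠ i := fun h => hj (Subtype.ext h)
      simp [hD, hE0 i j.1 (fun h => hji h.symm) x hx, hE0 i i₀ hi x hx]
    · simp
  -- degree of combinations
  have hdegsum : ∀ n : I → ℤ, divDeg (∑ i, n i • E i) = ∑ i, n i * divDeg (E i) := by
    intro n
    rw [map_sum]
    exact Finset.sum_congr rfl fun i _ => by rw [map_zsmul, smul_eq_mul]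
  refine ⟨?_, ?_, ?_⟩
  · -- linear independence
    rw [Fintype.linearIndependent_iff]
    intro g hg ⟨i, hi⟩
    have := evalD g i hi (pt i) (hpt i)
    rw [hg] at this
    simpa using this.symm
  · -- the closure is V ⊓ ker divDeg
    apply le_antisymm
    · rw [AddSubgroup.closure_le]
      rintro _ ⟨j, rfl⟩
      have h1 : D j.1 ∈ AddSubgroup.closure (Set.range E) := by
        rw [hD]
        exact sub_mem (AddSubgroup.subset_closure ⟨j.1, rfl⟩)
          (AddSubgroup.zsmul_mem _ (AddSubgroup.subset_closure (Set.mem_range_self i₀)) _)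
      have h2 : D j.1 ∈ (divDeg (X := X)).ker := by
        have : divDeg (D j.1) = 0 := by
          rw [hD, map_sub, map_zsmul, hi₀, smul_eq_mul, mul_one, sub_self]
        simpa [AddMonoidHom.mem_ker] using this
      exact AddSubgroup.mem_inf.mpr ⟨h1, h2⟩
    · rintro v ⟨hvV, hv0⟩
      obtain ⟨n, rfl⟩ := (aux_memV_iff E v).mp hvV
      have hdeg0 : ∑ i, n i * divDeg (E i) = 0 := by
        rw [← hdegsum]; exact hv0
      -- rewrite v as a combination of the D's
      have key : ∑ j : {i : I // i ≠ i₀}, n j.1 • D j.1 = ∑ i, n i • E i := by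
        have hsub : ∀ f : I → (X →₀ ℤ),
            ∑ j : {i : I // i ≠ i₀}, f j.1 = ∑ j ∈ Finset.univ.erase i₀, f j := by
          intro f
          exact (Finset.sum_subtype _ (fun x => by simp [Finset.mem_erase]) f).symm
        have hsub' : ∀ f : I → ℤ,
            ∑ j : {i : I // i ≠ i₀}, f j.1 = ∑ j ∈ Finset.univ.erase i₀, f j := by
          intro f
          exact (Finset.sum_subtype _ (fun x => by simp [Finset.mem_erase]) f).symm
        have expand : ∑ j : {i : I // i ≠ i₀}, n j.1 • D j.1 =
            (∑ j ∈ Finset.univ.erase i₀, n j • E j) -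
              (∑ j ∈ Finset.univ.erase i₀, n j * divDeg (E j)) • E i₀ := by
          rw [← hsub, ← hsub']
          rw [Finset.sum_smul, ← Finset.sum_sub_distrib]
          refine Finset.sum_congr rfl fun j _ => ?_
          rw [hD, smul_sub, smul_smul]
        rw [expand]
        rw [Finset.sum_erase_eq_sub (Finset.mem_univ i₀),
          Finset.sum_erase_eq_sub (Finset.mem_univ i₀), hdeg0]
        rw [hi₀, mul_one]
        rw [zero_sub, neg_smul, sub_neg_eq_add, sub_add_cancel]
      rw [← key]
      exact AddSubgroup.sum_mem _ fun j _ =>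
        AddSubgroup.zsmul_mem _ (AddSubgroup.subset_closure (Set.mem_range_self j)) _
  · -- torsion-freeness of the quotient
    intro g hg hfin
    obtain ⟨x, rfl⟩ := QuotientAddGroup.mk_surjective g
    apply hg
    obtain ⟨n, hn, hng⟩ := isOfFinAddOrder_iff_nsmul_eq_zero.mp hfin
    have hsm : ((↑(n • x) :
        (↥(divDeg (X := X)).ker ⧸ ((AddSubgroup.closure (Set.range E)).comap
          (divDeg (X := X)).ker.subtype)))) = 0 := by
      rw [QuotientAddGroup.mk_nsmul]
      exact hng
    have hmem : n • x ∈ (AddSubgroup.closure (Set.range E)).comap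
        (divDeg (X := X)).ker.subtype :=
      (QuotientAddGroup.eq_zero_iff _).mp hsm
    have hmem' : (n : ℤ) • (x : X →₀ ℤ) ∈ AddSubgroup.closure (Set.range E) := by
      have h := AddSubgroup.mem_comap.mp hmem
      simpa [natCast_zsmul] using h
    obtain ⟨m, hm⟩ := (aux_memV_iff E _).mp hmem'
    obtain ⟨k, hk⟩ := aux_divide E hne hred hdisj (n : ℤ)
      (by exact_mod_cast hn.ne') (x : X →₀ ℤ) m hm
    rw [QuotientAddGroup.eq_zero_iff]
    exact AddSubgroup.mem_comap.mpr ((aux_memV_iff E _).mpr ⟨k, hk⟩)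
end

section
/- Let G be a group acting on sets X and Y, and let ∧²X denote the set of 2-element subsets of X (equivalently, unordered pairs {x, x'} with x ≠ x'), with its induced G-action. Suppose the cardinality of X is not equal to 2, and suppose there exists an injective G-equivariant map Ψ' : ∧²X → Y, i.e., Ψ'({g·x, g·x'}) = g·Ψ'({x, x'}) for all g ∈ G and all x ≠ x'. Then every g ∈ G that fixes Y pointwise also fixes X pointwise. -/
/-- Lemma 7.2(c): if `G` acts on `X` and `Y`, the cardinality of `X` is not `2`, and
there is an injective `G`-equivariant map `Ψ' : ∧²X → Y` from the set of 2-element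
subsets of `X`, then every `g ∈ G` fixing `Y` pointwise fixes `X` pointwise. -/
theorem fixes_of_equivariant_injection_pairs
    {G X Y : Type*} [Group G] [MulAction G X] [MulAction G Y] [DecidableEq X]
    (hX : Nat.card X ≠ 2)
    (Ψ' : {s : Finset X // s.card = 2} → Y)
    (hinj : Function.Injective Ψ')
    (hequiv : ∀ (g : G) (s t : {s : Finset X // s.card = 2}),
      t.1 = s.1.image (fun x => g • x) → Ψ' t = g • Ψ' s)
    (g : G) (hgY : ∀ y : Y, g • y = y) :
    ∀ x : X, g • x = x := by
  have hginj : Function.Injective (fun x : X => g • x) :=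
    MulAction.injective g
  -- every 2-element subset is fixed setwise by g
  have hfix : ∀ s : {s : Finset X // s.card = 2},
      s.1.image (fun x => g • x) = s.1 := by
    intro s
    have hcard : (s.1.image (fun x => g • x)).card = 2 := by
      rw [Finset.card_image_of_injective _ hginj, s.2]
    have h := hequiv g s ⟨_, hcard⟩ rfl
    rw [hgY] at h
    have := hinj h
    exact congrArg Subtype.val this
  intro x
  by_contra hx
  set y := g • x with hy
  have hxy : x ≠ y := fun h => hx h.symm
  have hpair : ({x, y} : Finset X).card = 2 := Finset.card_pair hxy
  -- there exists z ∉ {x, y}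
  have hz : ∃ z : X, z ≠ x ∧ z ≠ y := by
    by_contra h
    push_neg at h
    apply hX
    rw [Nat.card_eq_two_iff]
    refine ⟨x, y, hxy, ?_⟩
    ext w
    simp only [Set.mem_insert_iff, Set.mem_singleton_iff, Set.mem_univ, iff_true]
    rcases eq_or_ne w x with h2 | h2
    · exact Or.inl h2
    · exact Or.inr (h w h2)
  obtain ⟨z, hzx, hzy⟩ := hz
  have hpair2 : ({x, z} : Finset X).card = 2 := Finset.card_pair (Ne.symm hzx)
  have h2 : Finset.image (fun x => g • x) {x, z} = ({x, z} : Finset X) :=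
    hfix ⟨{x, z}, hpair2⟩
  have : g • x ∈ ({x, z} : Finset X) := by
    rw [← h2]
    exact Finset.mem_image_of_mem _ (Finset.mem_insert_self x {z})
  simp only [Finset.mem_insert, Finset.mem_singleton] at this
  rcases this with h3 | h3
  · exact hx h3
  · exact hzy (h3.symm.trans hy.symm)
end
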